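/- For every k ≥ 2, the k-uniform hypergraph H_{k,1} with vertex set {(i,j) : 1 ≤ i,j ≤ k} and edge set consisting of the k columns {(i,j) : 1 ≤ i ≤ k} for each fixed j ∈ {1,…,k} together with the k−1 rows {(i,j) : 1 ≤ j ≤ k} for each fixed i ∈ {1,…,k−1} satisfies γ_g(H_{k,1}) = γ_g'(H_{k,1}) = k + ⌊(k−1)/2⌋. -/

import Mathlib

attribute [local instance 10] Classical.propDecidable

variable {V : Type}

/-- The closed neighborhood of a vertex in a hypergraph given by its edge set. -/
noncomputable def closedNbhd [Fintype V] (H : Finset (Finset V)) (v : V) : Finset V :=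
  Finset.univ.filter (fun u => u = v ∨ ∃ e ∈ H, u ∈ e ∧ v ∈ e)

private lemma card_sdiff_union_lt [Fintype V] {S T : Finset V} (h : ¬ T ⊆ S) :
    (Finset.univ \ (S ∪ T)).card < (Finset.univ \ S).card := by
  classical
  obtain ⟨u, huT, huS⟩ := Finset.not_subset.mp h
  apply Finset.card_lt_card
  rw [Finset.ssubset_def]
  constructor
  · exact Finset.sdiff_subset_sdiff (Finset.Subset.refl _) Finset.subset_union_left
  · intro hc
    have hu : u ∈ Finset.univ \ S := by simp [huS]
    have := hc hu
    simp [huT] at this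

/-- Value of the domination game on a hypergraph: `S` is the set of vertices already
dominated, `dom = true` iff Dominator is the next player to move.  A legal move is a vertex
dominating at least one new vertex; Dominator minimizes, Staller maximizes the total
number of moves, and both play optimally. -/
noncomputable def domGameVal [Fintype V] (H : Finset (Finset V)) (dom : Bool) (S : Finset V) :
    ℕ :=
  if h : (Finset.univ.filter fun v => ¬ closedNbhd H v ⊆ S).Nonempty then
    1 + (if dom then
        (Finset.univ.filter fun v => ¬ closedNbhd H v ⊆ S).attach.inf'
          (Finset.attach_nonempty_iff.mpr h)
          (fun v => domGameVal H false (S ∪ closedNbhd H v.1))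
      else
        (Finset.univ.filter fun v => ¬ closedNbhd H v ⊆ S).attach.sup'
          (Finset.attach_nonempty_iff.mpr h)
          (fun v => domGameVal H true (S ∪ closedNbhd H v.1)))
  else 0
termination_by (Finset.univ \ S).card
decreasing_by
  · exact card_sdiff_union_lt (Finset.mem_filter.mp v.2).2
  · exact card_sdiff_union_lt (Finset.mem_filter.mp v.2).2

/-- The game domination number (Dominator starts). -/
noncomputable def gammaGame [Fintype V] (H : Finset (Finset V)) : ℕ :=
  domGameVal H true ∅

/-- The Staller-start game domination number. -/
noncomputable def gammaGame' [Fintype V] (H : Finset (Finset V)) : ℕ :=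
  domGameVal H false ∅

/-- The hypergraph `H_{k,1}`: its vertices are the cells of the `k × k` grid, its edges
are all `k` columns (second coordinate fixed) together with the first `k - 1` rows
(first coordinate fixed). -/
noncomputable def Hk1 (k : ℕ) : Finset (Finset (Fin k × Fin k)) :=
  (Finset.univ : Finset (Fin k)).image
      (fun j => Finset.univ.filter (fun p : Fin k × Fin k => p.2 = j)) ∪
    ((Finset.univ : Finset (Fin k)).filter (fun i : Fin k => (i : ℕ) < k - 1)).image
      (fun i => Finset.univ.filter (fun p : Fin k × Fin k => p.1 = i))

namespace Stmt17

variable {k : ℕ}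

noncomputable def SSet (C R : Finset (Fin k)) : Finset (Fin k × Fin k) :=
  Finset.univ.filter (fun p => p.2 ∈ C ∨ p.1 ∈ R)

noncomputable def legalSet {W : Type} [Fintype W] (H : Finset (Finset W)) (S : Finset W) :
    Finset W :=
  Finset.univ.filter fun v => ¬ closedNbhd H v ⊆ S

lemma mem_legalSet {W : Type} [Fintype W] (H : Finset (Finset W)) (S : Finset W) (v : W) :
    v ∈ legalSet H S ↔ ¬ closedNbhd H v ⊆ S := by
  unfold legalSet
  rw [Finset.mem_filter]
  simp

noncomputable def nextS {W : Type} [Fintype W] (H : Finset (Finset W)) (S : Finset W)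
    (v : W) : Finset W :=
  S ∪ closedNbhd H v

lemma domGameVal_true_eq {W : Type} [Fintype W] (H : Finset (Finset W)) (S : Finset W)
    (hS : (legalSet H S).Nonempty) :
    domGameVal H true S = 1 + (legalSet H S).attach.inf'
      (Finset.attach_nonempty_iff.mpr hS)
      (fun v => domGameVal H false (nextS H S v.1)) := by
  unfold legalSet at hS
  unfold legalSet nextS
  rw [domGameVal, dif_pos hS]
  simp

lemma domGameVal_false_eq {W : Type} [Fintype W] (H : Finset (Finset W)) (S : Finset W)
    (hS : (legalSet H S).Nonempty) :
    domGameVal H false S = 1 + (legalSet H S).attach.sup'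
      (Finset.attach_nonempty_iff.mpr hS)
      (fun v => domGameVal H true (nextS H S v.1)) := by
  unfold legalSet at hS
  unfold legalSet nextS
  rw [domGameVal, dif_pos hS]
  simp

lemma legalSet_empty {W : Type} [Fintype W] (H : Finset (Finset W)) (S : Finset W)
    (hS : ¬ (legalSet H S).Nonempty) (dom : Bool) : domGameVal H dom S = 0 := by
  unfold legalSet at hS
  rw [domGameVal, dif_neg hS]

set_option maxHeartbeats 1000000 in
lemma nbhd_eq (i j : Fin k) :
    closedNbhd (Hk1 k) (i, j) =
      Finset.univ.filter (fun p : Fin k × Fin k => p.2 = j ∨ ((i : ℕ) < k - 1 ∧ p.1 = i)) := by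
  ext ⟨a, b⟩
  simp only [closedNbhd, Hk1, Finset.mem_filter, Finset.mem_univ, true_and,
    Finset.mem_union, Finset.mem_image]
  constructor
  · rintro (h | ⟨e, (⟨j', -, rfl⟩ | ⟨i', hi', rfl⟩), he1, he2⟩)
    · left; exact congrArg Prod.snd h
    · simp only [Finset.mem_filter, Finset.mem_univ, true_and] at he1 he2
      left; rw [he1, ← he2]
    · simp only [Finset.mem_filter, Finset.mem_univ, true_and,
        Finset.mem_image] at he1 he2 hi'
      right; exact ⟨he2 ▸ hi', he1.trans he2.symm⟩
  · rintro (h | ⟨hi, h⟩)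
    · right
      refine ⟨Finset.univ.filter (fun p : Fin k × Fin k => p.2 = j),
        Or.inl ⟨j, rfl⟩, ?_, ?_⟩ <;> simp [h]
    · right
      refine ⟨Finset.univ.filter (fun p : Fin k × Fin k => p.1 = i),
        Or.inr ⟨i, hi, rfl⟩, ?_, ?_⟩ <;> simp [h]

lemma nextS_eq (C R : Finset (Fin k)) (i j : Fin k) :
    nextS (Hk1 k) (SSet C R) (i, j) =
      SSet (insert j C) (if (i : ℕ) < k - 1 then insert i R else R) := by
  unfold nextS
  rw [nbhd_eq]
  ext ⟨a, b⟩
  by_cases h : (i : ℕ) < k - 1 <;>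
    simp [SSet, h, Finset.mem_union, Finset.mem_insert] <;> tauto

lemma nbhd_subset_iff (hk : 2 ≤ k) (C R : Finset (Fin k))
    (hR : ∀ i ∈ R, (i : ℕ) < k - 1) (i j : Fin k) :
    closedNbhd (Hk1 k) (i, j) ⊆ SSet C R ↔
      j ∈ C ∧ ((i : ℕ) < k - 1 → (i ∈ R ∨ C = Finset.univ)) := by
  rw [nbhd_eq]
  constructor
  · intro h
    have hlast : ((⟨k - 1, by omega⟩ : Fin k), j) ∈ SSet C R := by
      apply h; simp
    have hjC : j ∈ C := by
      simp only [SSet, Finset.mem_filter, Finset.mem_univ, true_and] at hlast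
      rcases hlast with h1 | h1
      · exact h1
      · exact absurd (hR _ h1) (by simp)
    refine ⟨hjC, fun hi => ?_⟩
    by_cases hiR : i ∈ R
    · exact Or.inl hiR
    · right
      apply Finset.eq_univ_of_forall
      intro b
      have hb : (i, b) ∈ SSet C R := by apply h; simp [hi]
      simp only [SSet, Finset.mem_filter, Finset.mem_univ, true_and] at hb
      tauto
  · rintro ⟨hjC, h⟩ ⟨a, b⟩ hp
    simp only [Finset.mem_filter, Finset.mem_univ, true_and] at hp
    simp only [SSet, Finset.mem_filter, Finset.mem_univ, true_and]
    rcases hp with rfl | ⟨hi, rfl⟩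
    · exact Or.inl hjC
    · rcases h hi with h1 | h1
      · exact Or.inr h1
      · left; rw [h1]; exact Finset.mem_univ _

/-- Dominator-to-move game value with `c` undominated columns, `r` undominated short rows. -/
def gD (c r : ℕ) : ℕ := if c = 0 then 0 else c + min (r / 2) (c - 1)

/-- Staller-to-move game value. -/
def gS (k c r : ℕ) : ℕ := if c = 0 then 0 else if c = k then gD c r else c + min ((r + 1) / 2) c

def gg (k : ℕ) (dom : Bool) (c r : ℕ) : ℕ := if dom then gD c r else gS k c r

lemma dom_eq_A {c r k : ℕ} (h1 : 1 ≤ c) (h2 : c ≤ k) (h3 : 1 ≤ r) :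
    gD c r = 1 + gS k (c - 1) (r - 1) := by
  simp only [gD, gS]; split_ifs <;> omega

lemma dom_eq_B0 {c k : ℕ} (h1 : 1 ≤ c) (h2 : c ≤ k) (hk : 2 ≤ k) :
    gD c 0 = 1 + gS k (c - 1) 0 := by
  simp only [gD, gS]; split_ifs <;> omega

lemma dom_le_B {c r k : ℕ} (h1 : 1 ≤ c) (h2 : c ≤ k) :
    gD c r ≤ 1 + gS k (c - 1) r := by
  simp only [gD, gS]; split_ifs <;> omega

lemma dom_le_C {c r k : ℕ} (h1 : 1 ≤ c) (h2 : c < k) (h3 : 1 ≤ r) :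
    gD c r ≤ 1 + gS k c (r - 1) := by
  simp only [gD, gS]; split_ifs <;> omega

lemma stal_eq_C {c r k : ℕ} (h1 : 1 ≤ c) (h2 : c < k) (h3 : 1 ≤ r) :
    gS k c r = 1 + gD c (r - 1) := by
  simp only [gD, gS]; split_ifs <;> omega

lemma stal_le_B {c r k : ℕ} (h1 : 1 ≤ c) (h2 : c ≤ k) (hk : 2 ≤ k) (hr : r ≤ k - 1)
    (h : r = 0 ∨ c = k) : gS k c r ≤ 1 + gD (c - 1) r := by
  simp only [gD, gS]; split_ifs <;> omega

lemma stal_ge_A {c r k : ℕ} (h1 : 1 ≤ c) (h2 : c ≤ k) (h3 : 1 ≤ r) (hr : r ≤ k - 1) (hk : 2 ≤ k) :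
    1 + gD (c - 1) (r - 1) ≤ gS k c r := by
  simp only [gD, gS]; split_ifs <;> omega

lemma stal_ge_B {c r k : ℕ} (h1 : 1 ≤ c) (h2 : c ≤ k) (hr : r ≤ k - 1) (hk : 2 ≤ k) :
    1 + gD (c - 1) r ≤ gS k c r := by
  simp only [gD, gS]; split_ifs <;> omega

lemma stal_ge_C {c r k : ℕ} (h1 : 1 ≤ c) (h2 : c < k) (h3 : 1 ≤ r) :
    1 + gD c (r - 1) ≤ gS k c r := by
  simp only [gD, gS]; split_ifs <;> omega

lemma smallrows_card (hk : 2 ≤ k) :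
    ((Finset.univ : Finset (Fin k)).filter (fun i : Fin k => (i : ℕ) < k - 1)).card = k - 1 := by
  have hneg : ((Finset.univ : Finset (Fin k)).filter (fun i : Fin k => ¬ (i : ℕ) < k - 1)) =
      {(⟨k - 1, by omega⟩ : Fin k)} := by
    ext i
    simp only [Finset.mem_filter, Finset.mem_univ, true_and, Finset.mem_singleton, Fin.ext_iff]
    have := i.isLt
    omega
  have h1 := Finset.card_filter_add_card_filter_not
    (s := (Finset.univ : Finset (Fin k))) (p := fun i : Fin k => (i : ℕ) < k - 1)
  rw [hneg] at h1
  simp only [Finset.card_singleton, Finset.card_univ, Fintype.card_fin] at h1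
  omega

lemma R_card_lt (hk : 2 ≤ k) (R : Finset (Fin k)) (hR : ∀ i ∈ R, (i : ℕ) < k - 1)
    {i : Fin k} (hi : (i : ℕ) < k - 1) (hiR : i ∉ R) : R.card < k - 1 := by
  have hsub : R ⊂ (Finset.univ : Finset (Fin k)).filter (fun i : Fin k => (i : ℕ) < k - 1) := by
    constructor
    · intro x hx; simp [hR x hx]
    · intro hsup
      exact hiR (hsup (by simp [hi]))
  calc R.card < _ := Finset.card_lt_card hsub
    _ = k - 1 := smallrows_card hk

lemma val_terminal (C R : Finset (Fin k)) (hC : C = Finset.univ) (dom : Bool) :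
    domGameVal (Hk1 k) dom (SSet C R) = 0 := by
  apply legalSet_empty
  rw [Finset.nonempty_iff_ne_empty]
  intro h
  apply h
  ext v
  rw [mem_legalSet]
  simp only [Finset.notMem_empty, iff_false, not_not]
  intro u hu
  simp [SSet, hC]

lemma main (hk : 2 ≤ k) : ∀ n (C R : Finset (Fin k)), (∀ i ∈ R, (i : ℕ) < k - 1) →
    (k - C.card) + ((k - 1) - R.card) ≤ n → ∀ dom,
    domGameVal (Hk1 k) dom (SSet C R) = gg k dom (k - C.card) ((k - 1) - R.card) := by
  intro n
  induction n with
  | zero =>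
    intro C R hR hn dom
    have hle : C.card ≤ k := by simpa using Finset.card_le_univ C
    have hCk : C.card = k := by omega
    have hC : C = Finset.univ := (Finset.card_eq_iff_eq_univ _).mp (by rw [hCk, Fintype.card_fin])
    rw [val_terminal C R hC]
    simp [gg, gD, gS, hCk]
  | succ n ih =>
    intro C R hR hn dom
    by_cases hC : C = Finset.univ
    · have hCk : C.card = k := by rw [hC, Finset.card_univ, Fintype.card_fin]
      rw [val_terminal C R hC]
      simp [gg, gD, gS, hCk]
    -- setup
    have hle : C.card ≤ k := by simpa using Finset.card_le_univ C
    have hCk : C.card ≠ k := fun h =>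
      hC ((Finset.card_eq_iff_eq_univ _).mp (by rw [h, Fintype.card_fin]))
    have hCcard : C.card < k := by omega
    have hrle : (k - 1) - R.card ≤ k - 1 := Nat.sub_le _ _
    obtain ⟨j0, hj0⟩ : ∃ j, j ∉ C := by
      by_contra h; push_neg at h; exact hC (Finset.eq_univ_of_forall h)
    have hlegal_mem : ∀ i j : Fin k,
        ((i, j) ∈ legalSet (Hk1 k) (SSet C R)) ↔
        ¬ (j ∈ C ∧ ((i : ℕ) < k - 1 → (i ∈ R ∨ C = Finset.univ))) := by
      intro i j
      rw [mem_legalSet, nbhd_subset_iff hk C R hR]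
    have hne : (legalSet (Hk1 k) (SSet C R)).Nonempty := by
      refine ⟨((⟨k - 1, by omega⟩ : Fin k), j0), ?_⟩
      rw [hlegal_mem]
      tauto
    -- value after a move
    have key : ∀ (d : Bool) (i j : Fin k),
        ((i, j) ∈ legalSet (Hk1 k) (SSet C R)) →
        domGameVal (Hk1 k) d (nextS (Hk1 k) (SSet C R) (i, j)) =
          gg k d (k - (insert j C).card)
            ((k - 1) - (if (i : ℕ) < k - 1 then insert i R else R).card) := by
      intro d i j hleg
      rw [nextS_eq]
      rw [hlegal_mem] at hleg
      have hR' : ∀ i' ∈ (if (i : ℕ) < k - 1 then insert i R else R), (i' : ℕ) < k - 1 := by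
        split_ifs with h
        · intro i' hi'
          rcases Finset.mem_insert.mp hi' with rfl | hi'
          · exact h
          · exact hR _ hi'
        · exact hR
      apply ih _ _ hR'
      by_cases hjC : j ∈ C
      · have h1 : ¬ ((i : ℕ) < k - 1 → (i ∈ R ∨ C = Finset.univ)) := by tauto
        push_neg at h1
        obtain ⟨hi, hiR, -⟩ := h1
        have hrpos := R_card_lt hk R hR hi hiR
        rw [Finset.insert_eq_self.mpr hjC, if_pos hi,
          Finset.card_insert_of_notMem hiR]
        omega
      · have hcard : (insert j C).card = C.card + 1 := Finset.card_insert_of_notMem hjC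
        have hRcard : R.card ≤ (if (i : ℕ) < k - 1 then insert i R else R).card := by
          split_ifs
          · exact Finset.card_le_card (Finset.subset_insert _ _)
          · exact le_rfl
        omega
    cases dom with
    | true =>
      rw [domGameVal_true_eq _ _ hne]
      simp only [gg, if_true]
      have hub : ∀ i j : Fin k,
          ((i, j) ∈ legalSet (Hk1 k) (SSet C R)) →
          gD (k - C.card) ((k - 1) - R.card) ≤
            1 + domGameVal (Hk1 k) false (nextS (Hk1 k) (SSet C R) (i, j)) := by
        intro i j hleg
        rw [key false i j hleg]
        have hleg' := (hlegal_mem i j).mp hleg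
        by_cases hjC : j ∈ C
        · have h1 : ¬ ((i : ℕ) < k - 1 → (i ∈ R ∨ C = Finset.univ)) := by tauto
          push_neg at h1
          obtain ⟨hi, hiR, -⟩ := h1
          have hrpos := R_card_lt hk R hR hi hiR
          rw [Finset.insert_eq_self.mpr hjC, if_pos hi, Finset.card_insert_of_notMem hiR]
          have hCpos : 0 < C.card := Finset.card_pos.mpr ⟨j, hjC⟩
          have h2 : (k - 1) - (R.card + 1) = ((k - 1) - R.card) - 1 := by omega
          rw [h2]
          exact dom_le_C (by omega) (by omega) (by omega)
        · rw [Finset.card_insert_of_notMem hjC]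
          have h2 : k - (C.card + 1) = (k - C.card) - 1 := by omega
          rw [h2]
          by_cases hi : (i : ℕ) < k - 1
          · by_cases hiR : i ∈ R
            · rw [if_pos hi, Finset.insert_eq_self.mpr hiR]
              exact dom_le_B (by omega) (by omega)
            · have hrpos := R_card_lt hk R hR hi hiR
              rw [if_pos hi, Finset.card_insert_of_notMem hiR]
              have h3 : (k - 1) - (R.card + 1) = ((k - 1) - R.card) - 1 := by omega
              rw [h3]
              exact le_of_eq (dom_eq_A (by omega) (by omega) (by omega))
          · rw [if_neg hi]
            exact dom_le_B (by omega) (by omega)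
      apply le_antisymm
      · -- 1 + inf' ≤ gD : pick a good move
        rcases Nat.eq_zero_or_pos ((k - 1) - R.card) with hr0 | hrpos
        · -- play (last, j0)
          have hwleg : (((⟨k - 1, by omega⟩ : Fin k), j0) ∈
              legalSet (Hk1 k) (SSet C R)) := by
            rw [hlegal_mem]; tauto
          have h1 := Finset.inf'_le (b := (⟨((⟨k - 1, by omega⟩ : Fin k), j0), hwleg⟩ :
              {x // x ∈ legalSet (Hk1 k) (SSet C R)}))
            (fun v => domGameVal (Hk1 k) false (nextS (Hk1 k) (SSet C R) v.1))
            (Finset.mem_attach _ _)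
          refine le_trans (Nat.add_le_add_left h1 1) ?_
          rw [key false _ _ hwleg]
          have hsmall : ¬ ((⟨k - 1, by omega⟩ : Fin k) : ℕ) < k - 1 := by simp
          rw [if_neg hsmall, Finset.card_insert_of_notMem hj0]
          have h2 : k - (C.card + 1) = (k - C.card) - 1 := by omega
          rw [h2, hr0]
          exact le_of_eq (dom_eq_B0 (by omega) (by omega) hk).symm
        · -- play (i0, j0) with i0 a fresh short row
          obtain ⟨i0, hi0, hi0R⟩ : ∃ i : Fin k, (i : ℕ) < k - 1 ∧ i ∉ R := by
            by_contra h
            push_neg at h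
            have hsub : (Finset.univ : Finset (Fin k)).filter
                (fun i : Fin k => (i : ℕ) < k - 1) ⊆ R := by
              intro x hx
              exact h x (Finset.mem_filter.mp hx).2
            have := Finset.card_le_card hsub
            rw [smallrows_card hk] at this
            omega
          have hwleg : ((i0, j0) ∈
              legalSet (Hk1 k) (SSet C R)) := by
            rw [hlegal_mem]; tauto
          have h1 := Finset.inf'_le (b := (⟨(i0, j0), hwleg⟩ :
              {x // x ∈ legalSet (Hk1 k) (SSet C R)}))
            (fun v => domGameVal (Hk1 k) false (nextS (Hk1 k) (SSet C R) v.1))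
            (Finset.mem_attach _ _)
          refine le_trans (Nat.add_le_add_left h1 1) ?_
          rw [key false _ _ hwleg, if_pos hi0, Finset.card_insert_of_notMem hj0,
            Finset.card_insert_of_notMem hi0R]
          have h2 : k - (C.card + 1) = (k - C.card) - 1 := by omega
          have h3 : (k - 1) - (R.card + 1) = ((k - 1) - R.card) - 1 := by omega
          rw [h2, h3]
          exact le_of_eq (dom_eq_A (by omega) (by omega) hrpos).symm
      · -- gD ≤ 1 + inf'
        obtain ⟨b, -, hbeq⟩ := Finset.exists_mem_eq_inf'
          (Finset.attach_nonempty_iff.mpr hne)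
          (fun v => domGameVal (Hk1 k) false (nextS (Hk1 k) (SSet C R) v.1))
        rw [hbeq]
        obtain ⟨⟨i, j⟩, hmem⟩ := b
        exact hub i j hmem
    | false =>
      rw [domGameVal_false_eq _ _ hne]
      simp only [gg, Bool.false_eq_true, if_false]
      have hub : ∀ i j : Fin k,
          ((i, j) ∈ legalSet (Hk1 k) (SSet C R)) →
          1 + domGameVal (Hk1 k) true (nextS (Hk1 k) (SSet C R) (i, j)) ≤
            gS k (k - C.card) ((k - 1) - R.card) := by
        intro i j hleg
        rw [key true i j hleg]
        have hleg' := (hlegal_mem i j).mp hleg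
        by_cases hjC : j ∈ C
        · have h1 : ¬ ((i : ℕ) < k - 1 → (i ∈ R ∨ C = Finset.univ)) := by tauto
          push_neg at h1
          obtain ⟨hi, hiR, -⟩ := h1
          have hrpos := R_card_lt hk R hR hi hiR
          rw [Finset.insert_eq_self.mpr hjC, if_pos hi, Finset.card_insert_of_notMem hiR]
          have hCpos : 0 < C.card := Finset.card_pos.mpr ⟨j, hjC⟩
          have h2 : (k - 1) - (R.card + 1) = ((k - 1) - R.card) - 1 := by omega
          rw [h2]
          exact stal_ge_C (by omega) (by omega) (by omega)
        · rw [Finset.card_insert_of_notMem hjC]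
          have h2 : k - (C.card + 1) = (k - C.card) - 1 := by omega
          rw [h2]
          by_cases hi : (i : ℕ) < k - 1
          · by_cases hiR : i ∈ R
            · rw [if_pos hi, Finset.insert_eq_self.mpr hiR]
              exact stal_ge_B (by omega) (by omega) hrle hk
            · have hrpos := R_card_lt hk R hR hi hiR
              rw [if_pos hi, Finset.card_insert_of_notMem hiR]
              have h3 : (k - 1) - (R.card + 1) = ((k - 1) - R.card) - 1 := by omega
              rw [h3]
              exact stal_ge_A (by omega) (by omega) (by omega) hrle hk
          · rw [if_neg hi]
            exact stal_ge_B (by omega) (by omega) hrle hk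
      apply le_antisymm
      · -- 1 + sup' ≤ gS
        obtain ⟨b, -, hbeq⟩ := Finset.exists_mem_eq_sup'
          (Finset.attach_nonempty_iff.mpr hne)
          (fun v => domGameVal (Hk1 k) true (nextS (Hk1 k) (SSet C R) v.1))
        rw [hbeq]
        obtain ⟨⟨i, j⟩, hmem⟩ := b
        exact hub i j hmem
      · -- gS ≤ 1 + sup' : pick a good Staller move
        by_cases hCR : C.Nonempty ∧ 1 ≤ (k - 1) - R.card
        · -- wasteful move (i0, j1) with j1 ∈ C, i0 fresh short row
          obtain ⟨⟨j1, hj1⟩, hrpos⟩ := hCR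
          obtain ⟨i0, hi0, hi0R⟩ : ∃ i : Fin k, (i : ℕ) < k - 1 ∧ i ∉ R := by
            by_contra h
            push_neg at h
            have hsub : (Finset.univ : Finset (Fin k)).filter
                (fun i : Fin k => (i : ℕ) < k - 1) ⊆ R := by
              intro x hx
              exact h x (Finset.mem_filter.mp hx).2
            have := Finset.card_le_card hsub
            rw [smallrows_card hk] at this
            omega
          have hwleg : ((i0, j1) ∈
              legalSet (Hk1 k) (SSet C R)) := by
            rw [hlegal_mem]
            intro hcon
            rcases hcon.2 hi0 with h | h
            · exact hi0R h
            · exact hC h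
          have h1 := Finset.le_sup' (b := (⟨(i0, j1), hwleg⟩ :
              {x // x ∈ legalSet (Hk1 k) (SSet C R)}))
            (fun v => domGameVal (Hk1 k) true (nextS (Hk1 k) (SSet C R) v.1))
            (Finset.mem_attach _ _)
          refine le_trans ?_ (Nat.add_le_add_left h1 1)
          rw [key true _ _ hwleg, Finset.insert_eq_self.mpr hj1, if_pos hi0,
            Finset.card_insert_of_notMem hi0R]
          have hCpos : 0 < C.card := Finset.card_pos.mpr ⟨j1, hj1⟩
          have h3 : (k - 1) - (R.card + 1) = ((k - 1) - R.card) - 1 := by omega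
          rw [h3]
          exact le_of_eq (stal_eq_C (by omega) (by omega) hrpos)
        · -- play (last, j0)
          have hwleg : (((⟨k - 1, by omega⟩ : Fin k), j0) ∈
              legalSet (Hk1 k) (SSet C R)) := by
            rw [hlegal_mem]; tauto
          have h1 := Finset.le_sup' (b := (⟨((⟨k - 1, by omega⟩ : Fin k), j0), hwleg⟩ :
              {x // x ∈ legalSet (Hk1 k) (SSet C R)}))
            (fun v => domGameVal (Hk1 k) true (nextS (Hk1 k) (SSet C R) v.1))
            (Finset.mem_attach _ _)
          refine le_trans ?_ (Nat.add_le_add_left h1 1)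
          rw [key true _ _ hwleg]
          have hsmall : ¬ ((⟨k - 1, by omega⟩ : Fin k) : ℕ) < k - 1 := by simp
          rw [if_neg hsmall, Finset.card_insert_of_notMem hj0]
          have h2 : k - (C.card + 1) = (k - C.card) - 1 := by omega
          rw [h2]
          apply stal_le_B (by omega) (by omega) hk hrle
          rcases Decidable.not_and_iff_or_not.mp hCR with h | h
          · right
            have : C = ∅ := Finset.not_nonempty_iff_eq_empty.mp h
            rw [this]
            simp
          · left; omega

end Stmt17


/-- for every `k ≥ 2`,
`γ_g(H_{k,1}) = γ_g'(H_{k,1}) = k + ⌊(k-1)/2⌋`. -/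
theorem stmt_17 (k : ℕ) (hk : 2 ≤ k) :
    gammaGame (Hk1 k) = k + (k - 1) / 2 ∧ gammaGame' (Hk1 k) = k + (k - 1) / 2 := by
  have hempty : (Stmt17.SSet (∅ : Finset (Fin k)) (∅ : Finset (Fin k))) = ∅ := by
    ext p; simp [Stmt17.SSet]
  have hm := Stmt17.main hk (k + k) ∅ ∅ (by simp) (by simp only [Finset.card_empty, Nat.sub_zero]; omega)
  rw [hempty] at hm
  have h1 := hm true
  have h2 := hm false
  rw [Finset.card_empty, Nat.sub_zero, Nat.sub_zero] at h1 h2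
  simp only [Stmt17.gg, Stmt17.gD, Stmt17.gS, Finset.card_empty, Nat.sub_zero, ↓reduceIte, Bool.false_eq_true] at h1 h2
  refine ⟨?_, ?_⟩
  · rw [gammaGame, h1]
    split_ifs <;> omega
  · rw [gammaGame', h2]
    split_ifs <;> omega
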